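/- For N = 4 with r_1 = -1, r_2 = 0, r_3 = r, r_4 = s (0 < r < s), a ratio vector (u, v, w) determines r and s uniquely: Dr = D_1 and Ds = D_2, where D_1 = (nu - m_1)(m_2 - nvw(1-u)), D_2 = (nu - m_1)·nv(1-u)(1-w), and D is the 2×2 determinant with rows (n(w-v) - m_3, n(1-w) - m_4) and (n(u-1)v(1-w), n(u-1)vw + m_2); moreover D > 0, 0 < D_1 < D_2. -/

import Mathlib

lemma clear4 (m1 m2 m3 m4 x r s : ℝ) (h1 : x+1 ≠ 0) (h2 : x ≠ 0) (h3 : x - r ≠ 0) (h4 : x - s ≠ 0)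
    (h : m1/(x+1) + m2/x + m3/(x-r) + m4/(x-s) = 0) :
    m1*(x*(x-r)*(x-s)) + m2*((x+1)*(x-r)*(x-s)) + m3*((x+1)*x*(x-s)) + m4*((x+1)*x*(x-r)) = 0 := by
  field_simp at h
  linarith

/-- For `N = 4` with roots `-1 < 0 < r < s`, the ratio vector `(u,v,w)` determines
`r` and `s` via `D r = D₁`, `D s = D₂`, with `D > 0` and `0 < D₁ < D₂`. -/
theorem stmt_19 (m1 m2 m3 m4 : ℝ) (hm1 : 0 < m1) (hm2 : 0 < m2) (hm3 : 0 < m3)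
    (hm4 : 0 < m4) (n : ℝ) (hn : n = m1 + m2 + m3 + m4)
    (r s : ℝ) (hr : 0 < r) (hrs : r < s)
    (x1 x2 x3 : ℝ) (hx1 : x1 ∈ Set.Ioo (-1 : ℝ) 0) (hx2 : x2 ∈ Set.Ioo 0 r)
    (hx3 : x3 ∈ Set.Ioo r s)
    (hc1 : m1 / (x1 + 1) + m2 / x1 + m3 / (x1 - r) + m4 / (x1 - s) = 0)
    (hc2 : m1 / (x2 + 1) + m2 / x2 + m3 / (x2 - r) + m4 / (x2 - s) = 0)
    (hc3 : m1 / (x3 + 1) + m2 / x3 + m3 / (x3 - r) + m4 / (x3 - s) = 0)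
    (u v w : ℝ) (hu : u = x1 + 1) (hv : v = x2 / r) (hw : w = (x3 - r) / (s - r))
    (D D1 D2 : ℝ)
    (hD : D = (n * (w - v) - m3) * (n * (u - 1) * v * w + m2) -
      (n * (1 - w) - m4) * (n * (u - 1) * v * (1 - w)))
    (hD1 : D1 = (n * u - m1) * (m2 - n * v * w * (1 - u)))
    (hD2 : D2 = (n * u - m1) * (n * v * (1 - u) * (1 - w))) :
    D * r = D1 ∧ D * s = D2 ∧ 0 < D ∧ 0 < D1 ∧ D1 < D2 := by
  obtain ⟨hx1a, hx1b⟩ := hx1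
  obtain ⟨hx2a, hx2b⟩ := hx2
  obtain ⟨hx3a, hx3b⟩ := hx3
  -- cleared-denominator forms of the critical point equations
  have E1 := clear4 m1 m2 m3 m4 x1 r s (ne_of_gt (by linarith)) (ne_of_lt hx1b)
    (ne_of_lt (by linarith)) (ne_of_lt (by linarith)) hc1
  have E2 := clear4 m1 m2 m3 m4 x2 r s (ne_of_gt (by linarith)) (ne_of_gt hx2a)
    (ne_of_lt (by linarith)) (ne_of_lt (by linarith)) hc2
  have E3 := clear4 m1 m2 m3 m4 x3 r s (ne_of_gt (by linarith)) (ne_of_gt (by linarith))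
    (ne_of_gt (by linarith)) (ne_of_lt (by linarith)) hc3
  -- the cubic n x³ + A x² + B x + C with explicit coefficients
  have E1' : n*x1^3 + (-(m1*(r+s)) + m2*(1-r-s) + m3*(1-s) + m4*(1-r))*x1^2
      + (m1*r*s + m2*(r*s-r-s) - m3*s - m4*r)*x1 + m2*r*s = 0 := by
    linear_combination E1 + x1^3*hn
  have E2' : n*x2^3 + (-(m1*(r+s)) + m2*(1-r-s) + m3*(1-s) + m4*(1-r))*x2^2
      + (m1*r*s + m2*(r*s-r-s) - m3*s - m4*r)*x2 + m2*r*s = 0 := by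
    linear_combination E2 + x2^3*hn
  have E3' : n*x3^3 + (-(m1*(r+s)) + m2*(1-r-s) + m3*(1-s) + m4*(1-r))*x3^2
      + (m1*r*s + m2*(r*s-r-s) - m3*s - m4*r)*x3 + m2*r*s = 0 := by
    linear_combination E3 + x3^3*hn
  have d12 : x1 - x2 ≠ 0 := ne_of_lt (by linarith)
  have d23 : x2 - x3 ≠ 0 := ne_of_lt (by linarith)
  have d13 : x1 - x3 ≠ 0 := ne_of_lt (by linarith)
  have G12 : n*(x1^2+x1*x2+x2^2) + (-(m1*(r+s)) + m2*(1-r-s) + m3*(1-s) + m4*(1-r))*(x1+x2)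
      + (m1*r*s + m2*(r*s-r-s) - m3*s - m4*r) = 0 := by
    apply mul_right_cancel₀ d12
    linear_combination E1' - E2'
  have G23 : n*(x2^2+x2*x3+x3^2) + (-(m1*(r+s)) + m2*(1-r-s) + m3*(1-s) + m4*(1-r))*(x2+x3)
      + (m1*r*s + m2*(r*s-r-s) - m3*s - m4*r) = 0 := by
    apply mul_right_cancel₀ d23
    linear_combination E2' - E3'
  have Sx : n*(x1+x2+x3) + (-(m1*(r+s)) + m2*(1-r-s) + m3*(1-s) + m4*(1-r)) = 0 := by
    apply mul_right_cancel₀ d13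
    linear_combination G12 - G23
  have hb2 : (m1*r*s + m2*(r*s-r-s) - m3*s - m4*r) = n*(x1*x2+x1*x3+x2*x3) := by
    linear_combination G12 - (x1+x2)*Sx
  have hc2' : m2*r*s = -(n*(x1*x2*x3)) := by
    linear_combination E1' - x1^2*Sx - x1*hb2
  -- substitution equalities
  have hx2e : x2 = v * r := by rw [hv]; field_simp
  have hsr : s - r ≠ 0 := sub_ne_zero.mpr hrs.ne'
  have hx3e : x3 = r + (s - r) * w := by rw [hw]; field_simp; ring
  -- the two linear equations in r, s
  have hI : (n*(w-v)-m3)*r + (n*(1-w)-m4)*s = n*u - m1 := by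
    linear_combination -Sx - n*hu + n*hx2e + n*hx3e - (1-r-s)*hn
  have hII : n*(u-1)*v*(1-w)*r + (n*(u-1)*v*w + m2)*s = 0 := by
    apply mul_right_cancel₀ hr.ne'
    linear_combination hc2' + n*x2*x3*hu - n*(u-1)*x3*hx2e - n*(u-1)*v*r*hx3e
  have goal1 : D * r = D1 := by
    linear_combination r*hD - hD1 + (n*(u-1)*v*w + m2)*hI - (n*(1-w)-m4)*hII
  have goal2 : D * s = D2 := by
    linear_combination s*hD - hD2 - (n*(u-1)*v*(1-w))*hI + (n*(w-v)-m3)*hII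
  -- positivity
  have key1 : n*(1+x1)*(1+x2)*(1+x3) = m1*(1+r)*(1+s) := by
    linear_combination Sx - hb2 + hc2' + hn
  have hn0 : 0 < n := by rw [hn]; linarith
  have hu1 : 0 < u := by rw [hu]; linarith
  have hu2 : u < 1 := by rw [hu]; linarith
  have hv1 : 0 < v := by rw [hv]; positivity
  have hv2 : v < 1 := by rw [hv, div_lt_one hr]; exact hx2b
  have hw1 : 0 < w := by rw [hw]; apply div_pos (by linarith) (by linarith)
  have hw2 : w < 1 := by rw [hw, div_lt_one (by linarith)]; linarith
  have p2 : (0:ℝ) < 1 + x2 := by linarith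
  have p3 : (0:ℝ) < 1 + x3 := by linarith
  have hp : (0:ℝ) < (1+x2)*(1+x3) := mul_pos p2 p3
  have e1 : (n*u - m1)*((1+x2)*(1+x3)) = m1*((1+r)*(1+s) - (1+x2)*(1+x3)) := by
    linear_combination key1 + n*(1+x2)*(1+x3)*hu
  have prodlt : (1+x2)*(1+x3) < (1+r)*(1+s) := by
    have h1 : (1+x2)*(1+x3) < (1+r)*(1+x3) :=
      mul_lt_mul_of_pos_right (by linarith) p3
    have h2 : (1+r)*(1+x3) < (1+r)*(1+s) :=
      mul_lt_mul_of_pos_left (by linarith) (by linarith)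
    linarith
  have h0 : 0 < (n*u - m1)*((1+x2)*(1+x3)) := by
    rw [e1]; exact mul_pos hm1 (by linarith)
  have hnum1 : 0 < n*u - m1 := by
    by_contra hcon
    push_neg at hcon
    have hle := mul_le_mul_of_nonneg_right hcon hp.le
    rw [zero_mul] at hle
    linarith
  have e2 : (m2 - n*v*w*(1-u))*(s*r) = n*(1-u)*v*r*(1-w)*r := by
    linear_combination hc2' + n*x2*x3*hu - n*(u-1)*x3*hx2e - n*(u-1)*v*r*hx3e
  have hnum2 : 0 < m2 - n*v*w*(1-u) := by
    have h1u : (0:ℝ) < 1 - u := by linarith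
    have h1w : (0:ℝ) < 1 - w := by linarith
    have hrhs : 0 < n*(1-u)*v*r*(1-w)*r :=
      mul_pos (mul_pos (mul_pos (mul_pos (mul_pos hn0 h1u) hv1) hr) h1w) hr
    have hsr2 : (0:ℝ) < s*r := mul_pos (lt_trans hr hrs) hr
    by_contra hcon
    push_neg at hcon
    have hle := mul_le_mul_of_nonneg_right hcon hsr2.le
    rw [zero_mul] at hle
    linarith
  have hD1pos : 0 < D1 := by rw [hD1]; exact mul_pos hnum1 hnum2
  have hDpos : 0 < D := by
    by_contra hcon
    push_neg at hcon
    have hle := mul_le_mul_of_nonneg_right hcon hr.le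
    rw [zero_mul] at hle
    linarith
  refine ⟨goal1, goal2, hDpos, hD1pos, ?_⟩
  have hpos := mul_pos hDpos (sub_pos.mpr hrs)
  have hring : D*(s-r) = D*s - D*r := by ring
  linarith
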